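/- For every positive integer n and every real number θ with |θ| ≤ 2, one has ∏_{k=0}^{n} |2n·e^{iθ} − k| ≥ exp(n·θ²/36) · ∏_{k=0}^{n} (2n − k), where the absolute values are complex moduli. -/

import Mathlib

lemma expB (x : ℝ) (h0 : 0 ≤ x) (h2 : x ≤ 2) : Real.exp (2/5 * x) ≤ 1 + x := by
  have hp : (0:ℝ) < 1 - x/5 := by linarith
  have h1 : 1 - x/5 ≤ Real.exp (-(x/5)) := by
    have := Real.add_one_le_exp (-(x/5)); linarith
  have hmul : Real.exp (x/5) * Real.exp (-(x/5)) = 1 := by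
    rw [← Real.exp_add]; simp
  have h2' : Real.exp (x/5) ≤ 1/(1 - x/5) := by
    rw [le_div_iff₀ hp]
    nlinarith [Real.exp_pos (x/5)]
  have h3 : Real.exp (2/5*x) = Real.exp (x/5) * Real.exp (x/5) := by
    rw [← Real.exp_add]; ring_nf
  rw [h3]
  have hep := (Real.exp_pos (x/5)).le
  have hfac : (0:ℝ) ≤ (2 - x) * (7 - x) := mul_nonneg (by linarith) (by linarith)
  calc Real.exp (x/5) * Real.exp (x/5) ≤ (1/(1-x/5)) * (1/(1-x/5)) := by
        apply mul_le_mul h2' h2' hep (by positivity)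
    _ ≤ 1 + x := by
        rw [div_mul_div_comm, div_le_iff₀ (by positivity)]
        nlinarith [mul_nonneg h0 hfac]

lemma cosB (θ : ℝ) (hθ : |θ| ≤ 2) : 5/18 * θ^2 ≤ 1 - Real.cos θ := by
  rcases eq_or_ne θ 0 with h0 | h0
  · simp [h0]
  · set x := |θ| / 2 with hxdef
    have hx0 : 0 < x := by positivity
    have hx1 : x ≤ 1 := by simp only [hxdef]; linarith
    have hsin : x - x^3/4 < Real.sin x := by
      have := Real.sin_gt_sub_cube hx0; nlinarith [pow_pos hx0 3]
    have hsq1 : x^2 ≤ 1 := by nlinarith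
    have hcube : 0 ≤ x - x^3/4 := by nlinarith
    have hid : Real.sin x ^ 2 = 1/2 - Real.cos (2*x) / 2 := by
      have h1 := Real.cos_sq x
      have h2 := Real.sin_sq_add_cos_sq x
      linarith
    have h2x : 2 * x = |θ| := by rw [hxdef]; ring
    have hca : Real.cos (2*x) = Real.cos θ := by rw [h2x, Real.cos_abs]
    have hθx : θ^2 = (2*x)^2 := by
      rw [hxdef]; rw [← sq_abs θ]; ring
    rw [hθx]
    have hs2 : (x - x^3/4)^2 ≤ Real.sin x ^ 2 := by
      nlinarith [mul_self_le_mul_self hcube hsin.le]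
    nlinarith [hs2, hid, hca, mul_nonneg (sq_nonneg x) (sq_nonneg (1 - x^2)),
      mul_nonneg (sq_nonneg x) (by nlinarith : (0:ℝ) ≤ 1 - x^2), sq_nonneg x]

set_option maxHeartbeats 1000000 in
theorem stmt4 (n : ℕ) (hn : 1 ≤ n) (θ : ℝ) (hθ : |θ| ≤ 2) :
    Real.exp ((n : ℝ) * θ ^ 2 / 36) * ∏ k ∈ Finset.range (n + 1), (2 * (n : ℝ) - k) ≤
      ∏ k ∈ Finset.range (n + 1),
        ‖2 * (n : ℂ) * Complex.exp (θ * Complex.I) - k‖ := by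
  have hn1 : (1:ℝ) ≤ n := by exact_mod_cast hn
  have hnpos : (0:ℝ) < n := by linarith
  have hcos1 := Real.cos_le_one θ
  have hcosm1 := Real.neg_one_le_cos θ
  have hc := cosB θ hθ
  have hθsq : (0:ℝ) ≤ θ^2 := sq_nonneg θ
  -- termwise bound
  have key : ∀ k ∈ Finset.range (n+1),
      (2*(n:ℝ) - k) * Real.exp ((k:ℝ)*θ^2/(18*n)) ≤
        ‖2 * (n : ℂ) * Complex.exp (θ * Complex.I) - k‖ := by
    intro k hk
    have hkn : (k:ℝ) ≤ n := by
      exact_mod_cast Nat.lt_succ_iff.mp (Finset.mem_range.mp hk)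
    have hk0 : (0:ℝ) ≤ k := Nat.cast_nonneg k
    have habs : (‖2 * (n : ℂ) * Complex.exp (θ * Complex.I) - k‖)^2
        = (2*(n:ℝ)*Real.cos θ - k)^2 + (2*(n:ℝ)*Real.sin θ)^2 := by
      rw [Complex.sq_norm, Complex.normSq_apply]
      simp [Complex.exp_ofReal_mul_I_re, Complex.exp_ofReal_mul_I_im, Complex.mul_re,
        Complex.mul_im, Complex.sub_re, Complex.sub_im]
      ring
    set x : ℝ := (k:ℝ) * (1 - Real.cos θ) / n with hxdef
    have hx0 : 0 ≤ x := by
      apply div_nonneg (mul_nonneg hk0 (by linarith)) hnpos.le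
    have hx2 : x ≤ 2 := by
      rw [hxdef, div_le_iff₀ hnpos]
      nlinarith
    have hexp2 : Real.exp ((k:ℝ)*θ^2/(18*n)) ^ 2 ≤ 1 + x := by
      have he : Real.exp ((k:ℝ)*θ^2/(18*n)) ^ 2 = Real.exp ((k:ℝ)*θ^2/(9*n)) := by
        rw [← Real.exp_nat_mul]; ring_nf
      rw [he]
      refine le_trans (Real.exp_le_exp.2 ?_) (expB x hx0 hx2)
      rw [hxdef, show (2:ℝ)/5 * ((k:ℝ)*(1-Real.cos θ)/n) = (2/5*((k:ℝ)*(1-Real.cos θ)))/n by ring,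
        div_le_div_iff₀ (by positivity) hnpos]
      nlinarith [mul_nonneg (mul_nonneg hnpos.le hk0) (by linarith : (0:ℝ) ≤ (1 - Real.cos θ) - 5/18*θ^2)]
    have hLnn : (0:ℝ) ≤ (2*(n:ℝ) - k) * Real.exp ((k:ℝ)*θ^2/(18*n)) :=
      mul_nonneg (by linarith) (Real.exp_pos _).le
    have hRnn : (0:ℝ) ≤ ‖2 * (n : ℂ) * Complex.exp (θ * Complex.I) - k‖ :=
      norm_nonneg _
    have hsq : ((2*(n:ℝ) - k) * Real.exp ((k:ℝ)*θ^2/(18*n)))^2 ≤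
        (‖2 * (n : ℂ) * Complex.exp (θ * Complex.I) - k‖)^2 := by
      rw [habs, mul_pow]
      have hsc := Real.sin_sq_add_cos_sq θ
      have hRHS : (2*(n:ℝ)*Real.cos θ - k)^2 + (2*(n:ℝ)*Real.sin θ)^2
          = (2*(n:ℝ)-k)^2 + 4*(n:ℝ)*k*(1-Real.cos θ) := by
        linear_combination (4*(n:ℝ)^2) * hsc
      rw [hRHS]
      have step1 : (2*(n:ℝ)-k)^2 * Real.exp ((k:ℝ)*θ^2/(18*n))^2 ≤ (2*(n:ℝ)-k)^2 * (1+x) :=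
        mul_le_mul_of_nonneg_left hexp2 (sq_nonneg _)
      refine step1.trans ?_
      have hx_le : (2*(n:ℝ)-k)^2 * x ≤ 4*(n:ℝ)*k*(1-Real.cos θ) := by
        rw [hxdef, mul_div_assoc', div_le_iff₀ hnpos]
        nlinarith [mul_nonneg (mul_nonneg hk0 (by linarith : (0:ℝ) ≤ 4*(n:ℝ) - k))
          (by linarith : (0:ℝ) ≤ 1 - Real.cos θ)]
      nlinarith [hx_le]
    exact le_of_pow_le_pow_left₀ two_ne_zero hRnn hsq
  -- combine
  have hfnn : ∀ k ∈ Finset.range (n+1), (0:ℝ) ≤ 2*(n:ℝ) - k := by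
    intro k hk
    have hkn : (k:ℝ) ≤ n := by
      exact_mod_cast Nat.lt_succ_iff.mp (Finset.mem_range.mp hk)
    linarith
  have hprod : ∏ k ∈ Finset.range (n+1), ((2*(n:ℝ) - k) * Real.exp ((k:ℝ)*θ^2/(18*n)))
      ≤ ∏ k ∈ Finset.range (n+1), ‖2 * (n : ℂ) * Complex.exp (θ * Complex.I) - k‖ :=
    Finset.prod_le_prod (fun k hk => mul_nonneg (hfnn k hk) (Real.exp_pos _).le) key
  refine le_trans ?_ hprod
  rw [Finset.prod_mul_distrib, ← Real.exp_sum]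
  have hsum : ∑ k ∈ Finset.range (n+1), (k:ℝ)*θ^2/(18*n) = ((n:ℝ)+1)*θ^2/36 := by
    rw [← Finset.sum_div, ← Finset.sum_mul]
    have h2 : (∑ i ∈ Finset.range (n+1), (i:ℝ)) = ((n:ℝ)+1)*n/2 := by
      have h := congrArg (Nat.cast (R := ℝ)) (Finset.sum_range_id_mul_two (n+1))
      push_cast at h
      linarith
    rw [h2]; field_simp; ring
  rw [hsum]
  have hPnn : (0:ℝ) ≤ ∏ k ∈ Finset.range (n+1), (2*(n:ℝ) - k) :=
    Finset.prod_nonneg hfnn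
  have hmono : Real.exp ((n:ℝ) * θ^2/36) ≤ Real.exp (((n:ℝ)+1)*θ^2/36) := by
    apply Real.exp_le_exp.2; nlinarith
  calc Real.exp ((n:ℝ) * θ^2/36) * ∏ k ∈ Finset.range (n+1), (2*(n:ℝ) - k)
      ≤ Real.exp (((n:ℝ)+1)*θ^2/36) * ∏ k ∈ Finset.range (n+1), (2*(n:ℝ) - k) :=
        mul_le_mul_of_nonneg_right hmono hPnn
    _ = (∏ k ∈ Finset.range (n+1), (2*(n:ℝ) - k)) * Real.exp (((n:ℝ)+1)*θ^2/36) := by ring
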